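/- Let μ be a locally finite Borel measure on [0, ∞), let δ > 0, c₁ > 0, and let r ≥ 1 be an integer, and suppose that μ([0, T)) ∼ c₁ · T^{(r−1)/2} · e^{δT} as T → ∞. Then for every s > δ the integral ∫_{[0,∞)} e^{−sT} dμ(T) is finite, and ∫_{[0,∞)} e^{−sT} dμ(T) ∼ c₁ · δ · Γ((r+1)/2) · (s − δ)^{−(r+1)/2} as s → δ⁺. (Abstract form of the asymptotic (eq_diverge) for the Dirichlet series ∑_{γ∈Γ} e^{−s·d(x,yγ)}, derived in Section 9 of the paper.) -/

import Mathlib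

open MeasureTheory Real Filter Set

set_option maxHeartbeats 1000000

lemma lapl_exp_tail {s : ℝ} (hs : 0 < s) (T : ℝ) :
    ∫⁻ t in Set.Ioi T, ENNReal.ofReal (s * Real.exp (-s * t)) = ENNReal.ofReal (Real.exp (-s * T)) := by
  have hint : IntegrableOn (fun t : ℝ => s * Real.exp (-s * t)) (Set.Ioi T) :=
    (exp_neg_integrableOn_Ioi T hs).const_mul s
  rw [← ofReal_integral_eq_lintegral_ofReal hint]
  · congr 1
    have hderiv : ∀ x ∈ Set.Ioi T, HasDerivAt (fun t : ℝ => -Real.exp (-s * t))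
        (s * Real.exp (-s * x)) x := by
      intro x _
      have h : HasDerivAt (fun t : ℝ => -Real.exp (-s * id t)) _ x :=
        (((hasDerivAt_id x).const_mul (-s)).exp).neg
      convert h using 1
      simp [id_eq]
      show s * Real.exp (-s * x) = -(Real.exp (-s * x) * (-s * 1))
      ring
    have htend : Tendsto (fun t : ℝ => -Real.exp (-s * t)) atTop (nhds 0) := by
      rw [show (0:ℝ) = -0 by ring]
      exact (Real.tendsto_exp_atBot.comp (tendsto_id.const_mul_atTop_of_neg (by linarith))).neg
    have := integral_Ioi_of_hasDerivAt_of_tendsto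
      (f := fun t : ℝ => -Real.exp (-s * t)) (f' := fun t => s * Real.exp (-s * t))
      ((Continuous.neg (by fun_prop)).continuousWithinAt) hderiv hint htend
    rw [this]; ring
  · filter_upwards [self_mem_ae_restrict (measurableSet_Ioi)] with x _
    positivity

lemma lapl_gamma_integrable {a u : ℝ} (ha : 0 ≤ a) (hu : 0 < u) :
    IntegrableOn (fun t : ℝ => t ^ a * Real.exp (-(u * t))) (Set.Ioi 0) := by
  have h := integrableOn_rpow_mul_exp_neg_mul_rpow (p := 1) (s := a) (b := u)
    (by linarith) one_pos hu
  refine h.congr_fun (fun x hx => ?_) measurableSet_Ioi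
  dsimp only
  rw [Real.rpow_one, neg_mul]

lemma lapl_gamma_lintegral {a u : ℝ} (ha : 0 ≤ a) (hu : 0 < u) :
    ∫⁻ t in Set.Ioi (0:ℝ), ENNReal.ofReal (t ^ a * Real.exp (-(u * t))) =
      ENNReal.ofReal (Real.Gamma (a + 1) * u ^ (-(a + 1))) := by
  rw [← ofReal_integral_eq_lintegral_ofReal (lapl_gamma_integrable ha hu)]
  · congr 1
    have h := Real.integral_rpow_mul_exp_neg_mul_Ioi (a := a + 1) (r := u) (by linarith) hu
    simp only [add_sub_cancel_right] at h
    rw [h, Real.rpow_neg hu.le, one_div, Real.inv_rpow hu.le]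
    ring
  · filter_upwards [self_mem_ae_restrict (measurableSet_Ioi)] with x hx
    have : (0:ℝ) < x := hx
    positivity

lemma lapl_rep (μ : Measure ℝ) [IsLocallyFiniteMeasure μ] {s : ℝ} (hs : 0 < s) :
    ∫⁻ T in Set.Ici (0:ℝ), ENNReal.ofReal (Real.exp (-s * T)) ∂μ =
      ∫⁻ t in Set.Ioi (0:ℝ), ENNReal.ofReal (s * Real.exp (-s * t)) * μ (Set.Ico 0 t) := by
  set F : ℝ × ℝ → ENNReal :=
    ({p : ℝ × ℝ | p.1 < p.2}.indicator (fun p => ENNReal.ofReal (s * Real.exp (-s * p.2)))) with hF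
  have hFmeas : Measurable F := by
    apply Measurable.indicator
    · fun_prop
    · exact measurableSet_lt measurable_fst measurable_snd
  have hstep1 : ∀ T ∈ Set.Ici (0:ℝ),
      ENNReal.ofReal (Real.exp (-s * T)) = ∫⁻ t in Set.Ioi (0:ℝ), F (T, t) := by
    intro T hT
    have h1 : ∀ t : ℝ, F (T, t) =
        (Set.Ioi T).indicator (fun t => ENNReal.ofReal (s * Real.exp (-s * t))) t := by
      intro t
      simp [hF, Set.indicator_apply, Set.mem_Ioi, Set.mem_setOf_eq]
    simp_rw [h1]
    rw [lintegral_indicator measurableSet_Ioi, Measure.restrict_restrict measurableSet_Ioi,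
      Set.Ioi_inter_Ioi, max_eq_left hT, lapl_exp_tail hs T]
  rw [setLIntegral_congr_fun measurableSet_Ici
    hstep1]
  rw [lintegral_lintegral_swap (μ := μ.restrict (Set.Ici 0)) (ν := volume.restrict (Set.Ioi 0))
    (f := fun T t => F (T, t)) hFmeas.aemeasurable]
  refine setLIntegral_congr_fun measurableSet_Ioi (fun t ht => ?_)
  have h2 : ∀ T : ℝ, F (T, t) =
      (Set.Iio t).indicator (fun _ => ENNReal.ofReal (s * Real.exp (-s * t))) T := by
    intro T
    simp [hF, Set.indicator_apply, Set.mem_Iio, Set.mem_setOf_eq]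
  simp_rw [h2]
  rw [lintegral_indicator measurableSet_Iio, Measure.restrict_restrict measurableSet_Iio,
    lintegral_const, Measure.restrict_apply MeasurableSet.univ, Set.univ_inter]
  congr 1
  rw [Set.Iio_inter_Ici]

lemma lapl_ptwise (μ : Measure ℝ) {s δ c₁ cc a t : ℝ} (hs : 0 < s) (hδ : 0 < δ) (hcc : 0 ≤ cc)
    (hc₁ : 0 < c₁) (ht : 0 < t)
    (h : μ (Set.Ico 0 t) ≤ ENNReal.ofReal (cc * (c₁ * t ^ a * Real.exp (δ * t)))) :
    ENNReal.ofReal (s * Real.exp (-s * t)) * μ (Set.Ico 0 t) ≤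
      ENNReal.ofReal ((cc * s * c₁) * (t ^ a * Real.exp (-((s - δ) * t)))) := by
  calc ENNReal.ofReal (s * Real.exp (-s * t)) * μ (Set.Ico 0 t)
      ≤ ENNReal.ofReal (s * Real.exp (-s * t)) *
        ENNReal.ofReal (cc * (c₁ * t ^ a * Real.exp (δ * t))) := mul_le_mul_right h _
    _ = ENNReal.ofReal ((s * Real.exp (-s * t)) * (cc * (c₁ * t ^ a * Real.exp (δ * t)))) :=
        (ENNReal.ofReal_mul (by positivity)).symm
    _ = ENNReal.ofReal ((cc * s * c₁) * (t ^ a * Real.exp (-((s - δ) * t)))) := by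
        congr 1
        rw [show Real.exp (-((s - δ) * t)) = Real.exp (-s * t) * Real.exp (δ * t) by
          rw [← Real.exp_add]; congr 1; ring]
        ring

lemma lapl_upper_piece (μ : Measure ℝ) {s u C a T₀ : ℝ} (hC : 0 ≤ C) (ha : 0 ≤ a) (hu : 0 < u)
    (hT₀ : 0 ≤ T₀)
    (hpt : ∀ t ∈ Set.Ioi T₀, ENNReal.ofReal (s * Real.exp (-s * t)) * μ (Set.Ico 0 t) ≤
      ENNReal.ofReal (C * (t ^ a * Real.exp (-(u * t))))) :
    ∫⁻ t in Set.Ioi T₀, ENNReal.ofReal (s * Real.exp (-s * t)) * μ (Set.Ico 0 t) ≤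
      ENNReal.ofReal (C * (Real.Gamma (a + 1) * u ^ (-(a + 1)))) := by
  calc ∫⁻ t in Set.Ioi T₀, ENNReal.ofReal (s * Real.exp (-s * t)) * μ (Set.Ico 0 t)
      ≤ ∫⁻ t in Set.Ioi T₀, ENNReal.ofReal (C * (t ^ a * Real.exp (-(u * t)))) :=
        setLIntegral_mono (by fun_prop) hpt
    _ ≤ ∫⁻ t in Set.Ioi (0:ℝ), ENNReal.ofReal (C * (t ^ a * Real.exp (-(u * t)))) :=
        lintegral_mono_set (Set.Ioi_subset_Ioi hT₀)
    _ = ENNReal.ofReal (C * (Real.Gamma (a + 1) * u ^ (-(a + 1)))) := by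
        simp_rw [ENNReal.ofReal_mul hC]
        rw [lintegral_const_mul' _ _ ENNReal.ofReal_ne_top, lapl_gamma_lintegral ha hu]

/-- **Abstract form of the asymptotic (eq_diverge) in Section 9 of the paper.**
Let `μ` be a locally finite Borel measure on `[0, ∞)` (modelled as a locally finite measure
on `ℝ` vanishing on `(-∞, 0)`), let `δ > 0`, `c₁ > 0`, `r ≥ 1` an integer, and suppose
`μ([0, T)) ∼ c₁ · T^((r-1)/2) · e^{δT}` as `T → ∞`.  Then for every `s > δ` the integral
`∫ e^{-sT} dμ(T)` is finite, and
`∫ e^{-sT} dμ(T) ∼ c₁ · δ · Γ((r+1)/2) · (s - δ)^(-(r+1)/2)` as `s → δ⁺`. -/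
theorem laplace_transform_asymptotics_of_measure
    (μ : Measure ℝ) [IsLocallyFiniteMeasure μ]
    (hμ_supp : μ (Set.Iio (0:ℝ)) = 0)
    (δ : ℝ) (hδ : 0 < δ)
    (c₁ : ℝ) (hc₁ : 0 < c₁)
    (r : ℕ) (hr : 1 ≤ r)
    (hasymp : Tendsto (fun T : ℝ =>
        (μ (Set.Ico 0 T)).toReal / (c₁ * T ^ (((r : ℝ) - 1) / 2) * Real.exp (δ * T)))
      atTop (nhds 1)) :
    (∀ s : ℝ, δ < s →
      (∫⁻ T in Set.Ici (0:ℝ), ENNReal.ofReal (Real.exp (-s * T)) ∂μ) < ⊤) ∧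
    Tendsto (fun s : ℝ =>
        (∫⁻ T in Set.Ici (0:ℝ), ENNReal.ofReal (Real.exp (-s * T)) ∂μ).toReal /
          (c₁ * δ * Real.Gamma (((r : ℝ) + 1) / 2) * (s - δ) ^ (-(((r : ℝ) + 1) / 2))))
      (nhdsWithin δ (Set.Ioi δ)) (nhds 1) := by
  have hr1 : (1:ℝ) ≤ (r:ℝ) := by exact_mod_cast hr
  set a : ℝ := ((r : ℝ) - 1) / 2 with ha_def
  set p : ℝ := ((r : ℝ) + 1) / 2 with hp_def
  have ha : 0 ≤ a := by rw [ha_def]; linarith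
  have hpa : p = a + 1 := by rw [hp_def, ha_def]; ring
  have hp0 : 0 < p := by rw [hpa]; linarith
  set Γp : ℝ := Real.Gamma p with hΓp_def
  have hΓp : 0 < Γp := Real.Gamma_pos_of_pos hp0
  -- bounds on the measure from the asymptotic hypothesis
  have hbound : ∀ ε : ℝ, 0 < ε → ∃ T₀ : ℝ, 1 ≤ T₀ ∧ ∀ T, T₀ ≤ T →
      μ (Set.Ico 0 T) ≤ ENNReal.ofReal ((1 + ε) * (c₁ * T ^ a * Real.exp (δ * T))) ∧
      ENNReal.ofReal ((1 - ε) * (c₁ * T ^ a * Real.exp (δ * T))) ≤ μ (Set.Ico 0 T) := by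
    intro ε hε
    have h := (Metric.tendsto_nhds.mp hasymp) ε hε
    rw [eventually_atTop] at h
    obtain ⟨T₁, hT₁⟩ := h
    refine ⟨max T₁ 1, le_max_right _ _, fun T hT => ?_⟩
    have hT1 : (1:ℝ) ≤ T := le_trans (le_max_right _ _) hT
    have hT0 : (0:ℝ) < T := lt_of_lt_of_le one_pos hT1
    have hG : 0 < c₁ * T ^ a * Real.exp (δ * T) := by
      have := Real.rpow_pos_of_pos hT0 a
      positivity
    have hd := hT₁ T (le_trans (le_max_left _ _) hT)
    rw [Real.dist_eq, abs_sub_lt_iff] at hd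
    have hμfin : μ (Set.Ico 0 T) ≠ ⊤ :=
      ((measure_mono Set.Ico_subset_Icc_self).trans_lt (isCompact_Icc.measure_lt_top)).ne
    constructor
    · rw [← ENNReal.ofReal_toReal hμfin]
      apply ENNReal.ofReal_le_ofReal
      have h1 := (div_lt_iff₀ hG).mp (show (μ (Set.Ico 0 T)).toReal /
          (c₁ * T ^ a * Real.exp (δ * T)) < 1 + ε by linarith [hd.1])
      linarith
    · apply ENNReal.ofReal_le_of_le_toReal
      have h2 := (lt_div_iff₀ hG).mp (show 1 - ε < (μ (Set.Ico 0 T)).toReal /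
          (c₁ * T ^ a * Real.exp (δ * T)) by linarith [hd.2])
      linarith
  -- finiteness
  have hfin : ∀ s : ℝ, δ < s →
      (∫⁻ T in Set.Ici (0:ℝ), ENNReal.ofReal (Real.exp (-s * T)) ∂μ) < ⊤ := by
    intro s hs
    have hs0 : 0 < s := hδ.trans hs
    have hu : 0 < s - δ := sub_pos.mpr hs
    obtain ⟨T₀, hT₀1, hT₀⟩ := hbound 1 one_pos
    have hT₀0 : (0:ℝ) < T₀ := lt_of_lt_of_le one_pos hT₀1
    rw [lapl_rep μ hs0, ← Set.Ioc_union_Ioi_eq_Ioi hT₀0.le,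
      lintegral_union measurableSet_Ioi (Set.Ioc_disjoint_Ioi le_rfl)]
    apply ENNReal.add_lt_top.mpr
    constructor
    · calc ∫⁻ t in Set.Ioc 0 T₀, ENNReal.ofReal (s * Real.exp (-s * t)) * μ (Set.Ico 0 t)
          ≤ ∫⁻ _t in Set.Ioc 0 T₀, ENNReal.ofReal s * μ (Set.Icc 0 T₀) := by
            refine setLIntegral_mono measurable_const (fun t ht => ?_)
            refine mul_le_mul' (ENNReal.ofReal_le_ofReal ?_)
              (measure_mono (Set.Ico_subset_Icc_self.trans (Set.Icc_subset_Icc_right ht.2)))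
            nlinarith [Real.exp_le_one_iff.mpr (show -s * t ≤ 0 by nlinarith [ht.1]), hs0]
        _ = ENNReal.ofReal s * μ (Set.Icc 0 T₀) * volume (Set.Ioc 0 T₀) := by
            rw [setLIntegral_const]
        _ < ⊤ := by
            refine ENNReal.mul_lt_top (ENNReal.mul_lt_top ENNReal.ofReal_lt_top
              isCompact_Icc.measure_lt_top) ?_
            simp [Real.volume_Ioc]
    · calc ∫⁻ t in Set.Ioi T₀, ENNReal.ofReal (s * Real.exp (-s * t)) * μ (Set.Ico 0 t)
          ≤ ENNReal.ofReal (((1+1) * s * c₁) * (Real.Gamma (a + 1) * (s - δ) ^ (-(a + 1)))) := by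
            refine lapl_upper_piece μ (by positivity) ha hu hT₀0.le (fun t ht => ?_)
            exact lapl_ptwise μ hs0 hδ (by norm_num) hc₁
              (lt_trans hT₀0 ht) (hT₀ t (le_of_lt ht)).1
        _ < ⊤ := ENNReal.ofReal_lt_top
  refine ⟨hfin, ?_⟩
  -- the asymptotic statement
  rw [Metric.tendsto_nhds]
  intro ε₀ hε₀
  set ε : ℝ := min (ε₀ / 2) (1 / 2) with hε_def
  have hε : 0 < ε := lt_min (by linarith) one_half_pos
  have hε₀2 : ε ≤ ε₀ / 2 := min_le_left _ _
  have hεhalf : ε ≤ 1 / 2 := min_le_right _ _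
  obtain ⟨T₀, hT₀1, hT₀⟩ := hbound ε hε
  have hT₀0 : (0:ℝ) < T₀ := lt_of_lt_of_le one_pos hT₀1
  set M : ℝ := (μ (Set.Icc 0 T₀)).toReal with hM_def
  have hM0 : 0 ≤ M := ENNReal.toReal_nonneg
  set K : ℝ := T₀ ^ a * T₀ with hK_def
  have hK0 : 0 ≤ K := by
    have := Real.rpow_nonneg hT₀0.le a
    positivity
  have key : ∀ s : ℝ, δ < s →
      ((∫⁻ T in Set.Ici (0:ℝ), ENNReal.ofReal (Real.exp (-s * T)) ∂μ).toReal /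
        (c₁ * δ * Γp * (s - δ) ^ (-p)) ≤ M / (c₁ * δ * Γp) * (s - δ) ^ p + (1 + ε) * (s / δ)) ∧
      ((1 - ε) * (s / δ) * (1 - (K / Γp) * (s - δ) ^ p) ≤
        (∫⁻ T in Set.Ici (0:ℝ), ENNReal.ofReal (Real.exp (-s * T)) ∂μ).toReal /
        (c₁ * δ * Γp * (s - δ) ^ (-p))) := by
    intro s hs
    have hs0 : 0 < s := hδ.trans hs
    have hu : 0 < s - δ := sub_pos.mpr hs
    have hΛfin := hfin s hs
    have hup : 0 < (s - δ) ^ p := Real.rpow_pos_of_pos hu p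
    have hunp : (s - δ) ^ (-p) = ((s - δ) ^ p)⁻¹ := Real.rpow_neg hu.le p
    have hD : 0 < c₁ * δ * Γp * (s - δ) ^ (-p) := by rw [hunp]; positivity
    have hsplit : (∫⁻ T in Set.Ici (0:ℝ), ENNReal.ofReal (Real.exp (-s * T)) ∂μ) =
        (∫⁻ t in Set.Ioc 0 T₀, ENNReal.ofReal (s * Real.exp (-s * t)) * μ (Set.Ico 0 t)) +
        (∫⁻ t in Set.Ioi T₀, ENNReal.ofReal (s * Real.exp (-s * t)) * μ (Set.Ico 0 t)) := by
      rw [lapl_rep μ hs0, ← Set.Ioc_union_Ioi_eq_Ioi hT₀0.le,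
        lintegral_union measurableSet_Ioi (Set.Ioc_disjoint_Ioi le_rfl)]
    have hub1 : (∫⁻ t in Set.Ioc 0 T₀, ENNReal.ofReal (s * Real.exp (-s * t)) * μ (Set.Ico 0 t))
        ≤ μ (Set.Icc 0 T₀) := by
      calc ∫⁻ t in Set.Ioc 0 T₀, ENNReal.ofReal (s * Real.exp (-s * t)) * μ (Set.Ico 0 t)
          ≤ ∫⁻ t in Set.Ioc 0 T₀, μ (Set.Icc 0 T₀) * ENNReal.ofReal (s * Real.exp (-s * t)) := by
            refine setLIntegral_mono (by fun_prop) (fun t ht => ?_)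
            rw [mul_comm]
            exact mul_le_mul'
              (measure_mono (Set.Ico_subset_Icc_self.trans (Set.Icc_subset_Icc_right ht.2))) le_rfl
        _ = μ (Set.Icc 0 T₀) * ∫⁻ t in Set.Ioc 0 T₀, ENNReal.ofReal (s * Real.exp (-s * t)) :=
            lintegral_const_mul' _ _ isCompact_Icc.measure_lt_top.ne
        _ ≤ μ (Set.Icc 0 T₀) * ∫⁻ t in Set.Ioi 0, ENNReal.ofReal (s * Real.exp (-s * t)) :=
            mul_le_mul' le_rfl (lintegral_mono_set Set.Ioc_subset_Ioi_self)
        _ = μ (Set.Icc 0 T₀) := by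
            rw [lapl_exp_tail hs0 0]
            simp
    have hub2 : (∫⁻ t in Set.Ioi T₀, ENNReal.ofReal (s * Real.exp (-s * t)) * μ (Set.Ico 0 t))
        ≤ ENNReal.ofReal (((1 + ε) * s * c₁) * (Γp * (s - δ) ^ (-p))) := by
      rw [hΓp_def, hpa]
      refine lapl_upper_piece μ (by positivity) ha hu hT₀0.le (fun t ht => ?_)
      exact lapl_ptwise μ hs0 hδ (by linarith) hc₁ (lt_trans hT₀0 ht) (hT₀ t (le_of_lt ht)).1
    have hupper : (∫⁻ T in Set.Ici (0:ℝ), ENNReal.ofReal (Real.exp (-s * T)) ∂μ).toReal ≤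
        M + (1 + ε) * s * c₁ * (Γp * (s - δ) ^ (-p)) := by
      have h1 : (∫⁻ T in Set.Ici (0:ℝ), ENNReal.ofReal (Real.exp (-s * T)) ∂μ) ≤
          μ (Set.Icc 0 T₀) + ENNReal.ofReal (((1 + ε) * s * c₁) * (Γp * (s - δ) ^ (-p))) := by
        rw [hsplit]; exact add_le_add hub1 hub2
      calc (∫⁻ T in Set.Ici (0:ℝ), ENNReal.ofReal (Real.exp (-s * T)) ∂μ).toReal
          ≤ (μ (Set.Icc 0 T₀) + ENNReal.ofReal (((1+ε)*s*c₁) * (Γp * (s-δ)^(-p)))).toReal :=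
            ENNReal.toReal_mono
              (ENNReal.add_ne_top.mpr ⟨isCompact_Icc.measure_lt_top.ne, ENNReal.ofReal_ne_top⟩) h1
        _ = M + (1 + ε) * s * c₁ * (Γp * (s - δ) ^ (-p)) := by
            rw [ENNReal.toReal_add isCompact_Icc.measure_lt_top.ne ENNReal.ofReal_ne_top,
              ENNReal.toReal_ofReal (by rw [hunp]; positivity)]
    have hlower : (1 - ε) * s * c₁ * (Γp * (s - δ) ^ (-p) - K) ≤
        (∫⁻ T in Set.Ici (0:ℝ), ENNReal.ofReal (Real.exp (-s * T)) ∂μ).toReal := by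
      have hS0 : ∫⁻ t in Set.Ioi (0:ℝ), ENNReal.ofReal (t ^ a * Real.exp (-((s - δ) * t))) =
          ENNReal.ofReal (Γp * (s - δ) ^ (-p)) := by
        rw [hΓp_def, hpa]
        exact lapl_gamma_lintegral ha hu
      have hS1 : ∫⁻ t in Set.Ioc 0 T₀, ENNReal.ofReal (t ^ a * Real.exp (-((s - δ) * t))) ≤
          ENNReal.ofReal K := by
        calc ∫⁻ t in Set.Ioc 0 T₀, ENNReal.ofReal (t ^ a * Real.exp (-((s - δ) * t)))
            ≤ ∫⁻ _t in Set.Ioc 0 T₀, ENNReal.ofReal (T₀ ^ a) := by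
              refine setLIntegral_mono measurable_const (fun t ht => ?_)
              refine ENNReal.ofReal_le_ofReal ?_
              have h1 : t ^ a ≤ T₀ ^ a := Real.rpow_le_rpow (le_of_lt ht.1) ht.2 ha
              have h2 : Real.exp (-((s - δ) * t)) ≤ 1 := by
                rw [Real.exp_le_one_iff]
                nlinarith [ht.1]
              nlinarith [Real.rpow_nonneg (le_of_lt ht.1) a, Real.exp_pos (-((s - δ) * t))]
          _ = ENNReal.ofReal (T₀ ^ a) * volume (Set.Ioc 0 T₀) := setLIntegral_const _ _
          _ = ENNReal.ofReal K := by
              rw [Real.volume_Ioc, sub_zero,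
                ← ENNReal.ofReal_mul (Real.rpow_nonneg hT₀0.le a), hK_def]
      have hsplit2 : (∫⁻ t in Set.Ioi (0:ℝ), ENNReal.ofReal (t ^ a * Real.exp (-((s-δ) * t)))) =
          (∫⁻ t in Set.Ioc 0 T₀, ENNReal.ofReal (t ^ a * Real.exp (-((s - δ) * t)))) +
          (∫⁻ t in Set.Ioi T₀, ENNReal.ofReal (t ^ a * Real.exp (-((s - δ) * t)))) := by
        rw [← Set.Ioc_union_Ioi_eq_Ioi hT₀0.le,
          lintegral_union measurableSet_Ioi (Set.Ioc_disjoint_Ioi le_rfl)]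
      have hS2 : ENNReal.ofReal (Γp * (s - δ) ^ (-p)) - ENNReal.ofReal K ≤
          ∫⁻ t in Set.Ioi T₀, ENNReal.ofReal (t ^ a * Real.exp (-((s - δ) * t))) := by
        rw [← hS0, hsplit2]
        calc (∫⁻ t in Set.Ioc 0 T₀, ENNReal.ofReal (t ^ a * Real.exp (-((s - δ) * t)))) +
            (∫⁻ t in Set.Ioi T₀, ENNReal.ofReal (t ^ a * Real.exp (-((s - δ) * t)))) -
            ENNReal.ofReal K
            ≤ (∫⁻ t in Set.Ioc 0 T₀, ENNReal.ofReal (t ^ a * Real.exp (-((s - δ) * t)))) +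
            (∫⁻ t in Set.Ioi T₀, ENNReal.ofReal (t ^ a * Real.exp (-((s - δ) * t)))) -
            (∫⁻ t in Set.Ioc 0 T₀, ENNReal.ofReal (t ^ a * Real.exp (-((s - δ) * t)))) :=
              tsub_le_tsub_left hS1 _
          _ ≤ ∫⁻ t in Set.Ioi T₀, ENNReal.ofReal (t ^ a * Real.exp (-((s - δ) * t))) := by
              rw [add_comm, ENNReal.add_sub_cancel_right (hS1.trans_lt ENNReal.ofReal_lt_top).ne]
      have hlow2 : ENNReal.ofReal ((1 - ε) * s * c₁) *
          (ENNReal.ofReal (Γp * (s - δ) ^ (-p)) - ENNReal.ofReal K) ≤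
          (∫⁻ T in Set.Ici (0:ℝ), ENNReal.ofReal (Real.exp (-s * T)) ∂μ) := by
        rw [hsplit]
        refine le_trans ?_ le_add_self
        calc ENNReal.ofReal ((1 - ε) * s * c₁) *
            (ENNReal.ofReal (Γp * (s - δ) ^ (-p)) - ENNReal.ofReal K)
            ≤ ENNReal.ofReal ((1 - ε) * s * c₁) *
              ∫⁻ t in Set.Ioi T₀, ENNReal.ofReal (t ^ a * Real.exp (-((s - δ) * t))) :=
              mul_le_mul' le_rfl hS2
          _ = ∫⁻ t in Set.Ioi T₀, ENNReal.ofReal (((1 - ε) * s * c₁) *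
              (t ^ a * Real.exp (-((s - δ) * t)))) := by
              rw [← lintegral_const_mul' _ _ ENNReal.ofReal_ne_top]
              congr 1
              ext t
              rw [ENNReal.ofReal_mul (show (0:ℝ) ≤ (1 - ε) * s * c₁ by
                have : (0:ℝ) ≤ 1 - ε := by linarith
                positivity)]
          _ ≤ ∫⁻ t in Set.Ioi T₀, ENNReal.ofReal (s * Real.exp (-s * t)) * μ (Set.Ico 0 t) := by
              refine lintegral_mono_ae ?_
              filter_upwards [self_mem_ae_restrict measurableSet_Ioi] with t ht
              have hμt := (hT₀ t (le_of_lt ht)).2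
              have ht0 : 0 < t := lt_trans hT₀0 ht
              calc ENNReal.ofReal (((1 - ε) * s * c₁) * (t ^ a * Real.exp (-((s - δ) * t))))
                  = ENNReal.ofReal ((s * Real.exp (-s * t)) *
                    ((1 - ε) * (c₁ * t ^ a * Real.exp (δ * t)))) := by
                    congr 1
                    rw [show Real.exp (-((s - δ) * t)) = Real.exp (-s * t) * Real.exp (δ * t) by
                      rw [← Real.exp_add]; congr 1; ring]
                    ring
                _ = ENNReal.ofReal (s * Real.exp (-s * t)) *
                    ENNReal.ofReal ((1 - ε) * (c₁ * t ^ a * Real.exp (δ * t))) :=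
                    ENNReal.ofReal_mul (by positivity)
                _ ≤ ENNReal.ofReal (s * Real.exp (-s * t)) * μ (Set.Ico 0 t) :=
                    mul_le_mul' le_rfl hμt
      have h3 : ENNReal.ofReal ((1 - ε) * s * c₁ * (Γp * (s - δ) ^ (-p) - K)) ≤
          (∫⁻ T in Set.Ici (0:ℝ), ENNReal.ofReal (Real.exp (-s * T)) ∂μ) := by
        refine le_trans (le_of_eq ?_) hlow2
        rw [← ENNReal.ofReal_sub _ hK0, ← ENNReal.ofReal_mul (show (0:ℝ) ≤ (1 - ε) * s * c₁ by
          have : (0:ℝ) ≤ 1 - ε := by linarith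
          positivity)]
      by_cases hx : 0 ≤ (1 - ε) * s * c₁ * (Γp * (s - δ) ^ (-p) - K)
      · calc (1 - ε) * s * c₁ * (Γp * (s - δ) ^ (-p) - K)
            = (ENNReal.ofReal ((1 - ε) * s * c₁ * (Γp * (s - δ) ^ (-p) - K))).toReal :=
              (ENNReal.toReal_ofReal hx).symm
          _ ≤ _ := ENNReal.toReal_mono hΛfin.ne h3
      · push_neg at hx
        exact le_trans hx.le ENNReal.toReal_nonneg
    constructor
    · rw [div_le_iff₀ hD]
      refine hupper.trans (le_of_eq ?_)
      rw [hunp]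
      field_simp
    · rw [le_div_iff₀ hD]
      refine le_trans (le_of_eq ?_) hlower
      rw [hunp]
      field_simp
  -- limits of the bounding functions
  have hus : Tendsto (fun s : ℝ => (s - δ) ^ p) (nhdsWithin δ (Set.Ioi δ)) (nhds 0) := by
    have h1 : Tendsto (fun s : ℝ => s - δ) (nhdsWithin δ (Set.Ioi δ))
        (nhdsWithin 0 (Set.Ioi 0)) := by
      apply tendsto_nhdsWithin_iff.mpr
      constructor
      · have h : Tendsto (fun s : ℝ => s - δ) (nhds δ) (nhds 0) := by
          simpa using (continuous_sub_right δ).tendsto δ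
        exact h.mono_left nhdsWithin_le_nhds
      · exact eventually_nhdsWithin_of_forall (fun s hs => Set.mem_Ioi.mpr (sub_pos.mpr hs))
    have h2 : Tendsto (fun u : ℝ => u ^ p) (nhdsWithin 0 (Set.Ioi 0)) (nhds 0) := by
      have hc : ContinuousAt (fun u : ℝ => u ^ p) 0 :=
        Real.continuousAt_rpow_const 0 p (Or.inr hp0.le)
      have h := hc.tendsto
      rw [Real.zero_rpow hp0.ne'] at h
      exact h.mono_left nhdsWithin_le_nhds
    exact h2.comp h1
  have hsd : Tendsto (fun s : ℝ => s / δ) (nhdsWithin δ (Set.Ioi δ)) (nhds 1) := by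
    have h : Tendsto (fun s : ℝ => s / δ) (nhds δ) (nhds (δ / δ)) :=
      (continuous_id.div_const δ).tendsto δ
    rw [div_self hδ.ne'] at h
    exact h.mono_left nhdsWithin_le_nhds
  have hU : Tendsto (fun s : ℝ => M / (c₁ * δ * Γp) * (s - δ) ^ p + (1 + ε) * (s / δ))
      (nhdsWithin δ (Set.Ioi δ)) (nhds (1 + ε)) := by
    have h := (hus.const_mul (M / (c₁ * δ * Γp))).add (hsd.const_mul (1 + ε))
    simpa using h
  have hL : Tendsto (fun s : ℝ => (1 - ε) * (s / δ) * (1 - (K / Γp) * (s - δ) ^ p))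
      (nhdsWithin δ (Set.Ioi δ)) (nhds (1 - ε)) := by
    have h := (hsd.const_mul (1 - ε)).mul ((tendsto_const_nhds (x := (1:ℝ))).sub (hus.const_mul (K / Γp)))
    simpa using h
  have hUev := hU.eventually_lt_const (show 1 + ε < 1 + ε₀ by linarith)
  have hLev := hL.eventually_const_lt (show 1 - ε₀ < 1 - ε by linarith)
  filter_upwards [hUev, hLev, self_mem_nhdsWithin] with s h1 h2 h3
  have hk := key s h3
  rw [Real.dist_eq, abs_sub_lt_iff]
  exact ⟨by linarith [hk.1], by linarith [hk.2]⟩
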